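/- The simple graph W̄, whose vertices are the normalized primitive pairs and in which (p₁,q₁) and (p₂,q₂) are adjacent if and only if |p₁q₂ − p₂q₁| = 2, is acyclic (contains no cycle); i.e., W̄ is a forest. -/

import Mathlib

/-- The type of normalized primitive pairs: coprime `(p,q)` with `q > 0`, or `q = 0`
and `p = 1`.  These correspond bijectively to slopes `p/q ∈ ℚ ∪ {∞}`. -/
def NPP : Type :=
  {v : ℤ × ℤ // IsCoprime v.1 v.2 ∧ (0 < v.2 ∨ (v.2 = 0 ∧ v.1 = 1))}

/-- The graph `W̄`: vertices are normalized primitive pairs, and `(p₁,q₁)`, `(p₂,q₂)` are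
adjacent iff `|p₁q₂ − p₂q₁| = 2`. -/
def Wbar : SimpleGraph NPP where
  Adj u v := |u.1.1 * v.1.2 - v.1.1 * u.1.2| = 2
  symm := by
    constructor
    intro u v h
    rw [abs_sub_comm]
    exact h
  loopless := by
    constructor
    intro v h
    rw [sub_self, abs_zero] at h
    exact absurd h (by norm_num)

private lemma abs_eq_two' {a : ℤ} (h : |a| = 2) : a = 2 ∨ a = -2 := by
  rcases abs_cases a with ⟨h1, _⟩ | ⟨h1, _⟩ <;> omega

private lemma not_both_even {a b : ℤ} (h : IsCoprime a b) : ¬ (2 ∣ a ∧ 2 ∣ b) := by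
  rintro ⟨h1, h2⟩
  have := Int.isUnit_iff.mp (h.isUnit_of_dvd' h1 h2)
  omega

/-- parity of the second coordinate of a neighbour matches the parity of `q`. -/
private lemma par_edge {p q r s : ℤ} (hv : ¬ (2 ∣ p ∧ 2 ∣ q)) (hu : ¬ (2 ∣ r ∧ 2 ∣ s))
    (he : p * s - r * q = 2 ∨ p * s - r * q = -2) :
    (2 ∣ q → 2 ∣ s) ∧ (¬ 2 ∣ q → ¬ 2 ∣ s) := by
  have h2 : (2 : ℤ) ∣ p * s - r * q := by rcases he with h | h <;> rw [h] <;> decide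
  constructor
  · intro hq
    have hp : ¬ (2 : ℤ) ∣ p := fun h => hv ⟨h, hq⟩
    have hrq : (2 : ℤ) ∣ r * q := hq.mul_left r
    have hps : (2 : ℤ) ∣ p * s := by
      have := dvd_add h2 hrq
      simpa [sub_add_cancel] using this
    rcases (Int.prime_two.dvd_mul.mp hps) with h | h
    · exact absurd h hp
    · exact h
  · intro hq hs
    have hr : ¬ (2 : ℤ) ∣ r := fun h => hu ⟨h, hs⟩
    have hps : (2 : ℤ) ∣ p * s := hs.mul_left p
    have hrq : (2 : ℤ) ∣ r * q := by
      have := dvd_sub hps h2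
      simpa [sub_sub_cancel] using this
    rcases (Int.prime_two.dvd_mul.mp hrq) with h | h
    · exact hr h
    · exact hq h

/-- Key uniqueness lemma: every vertex of `W̄` has at most one neighbour that is smaller
in the lexicographic order on `(q, p)`. -/
private lemma unique_lower (v u w : NPP) (hu : Wbar.Adj v u) (hw : Wbar.Adj v w)
    (hult : toLex (u.1.2, u.1.1) < toLex (v.1.2, v.1.1))
    (hwlt : toLex (w.1.2, w.1.1) < toLex (v.1.2, v.1.1)) : u = w := by
  obtain ⟨⟨p, q⟩, hvc, hvn⟩ := v
  obtain ⟨⟨r, s⟩, huc, hun⟩ := u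
  obtain ⟨⟨r', s'⟩, hwc, hwn⟩ := w
  have he : p * s - r * q = 2 ∨ p * s - r * q = -2 := abs_eq_two' hu
  have hf : p * s' - r' * q = 2 ∨ p * s' - r' * q = -2 := abs_eq_two' hw
  rw [Prod.Lex.lt_iff] at hult hwlt
  simp only [ofLex_toLex] at hult hwlt hvn hun hwn
  replace hvc : IsCoprime p q := hvc
  replace huc : IsCoprime r s := huc
  replace hwc : IsCoprime r' s' := hwc
  have hv2 := not_both_even hvc
  have hu2 := not_both_even huc
  have hw2 := not_both_even hwc
  suffices h : r = r' ∧ s = s' by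
    apply Subtype.ext
    simp only [Prod.mk.injEq]
    exact h
  -- normalization bounds
  have hs0 : 0 ≤ s := by rcases hun with h | ⟨h, _⟩ <;> omega
  have hs'0 : 0 ≤ s' := by rcases hwn with h | ⟨h, _⟩ <;> omega
  rcases hvn with hq0 | ⟨hq0, hp1⟩
  swap
  · -- q = 0, p = 1 : no smaller neighbours at all
    exfalso
    rw [hq0, hp1] at hult
    rcases hult with h | ⟨h, h2⟩
    · omega
    · rcases hun with h3 | ⟨h3, h4⟩ <;> omega
  by_cases hq1 : q = 1
  · -- q = 1 : unique smaller neighbour is (p-2, 1)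
    subst hq1
    have hu1 : s = 1 ∧ r = p - 2 := by
      rcases hult with h | ⟨h, h2⟩
      · -- s < 1, so s = 0, so u = (1,0), but then |det| = 1
        exfalso
        have hs : s = 0 := by omega
        have hr : r = 1 := by rcases hun with h3 | ⟨h3, h4⟩ <;> omega
        rw [hs, hr] at he
        simp at he
      · rw [h] at he
        simp only [mul_one] at he
        omega
    have hw1 : s' = 1 ∧ r' = p - 2 := by
      rcases hwlt with h | ⟨h, h2⟩
      · exfalso
        have hs : s' = 0 := by omega
        have hr : r' = 1 := by rcases hwn with h3 | ⟨h3, h4⟩ <;> omega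
        rw [hs, hr] at hf
        simp at hf
      · rw [h] at hf
        simp only [mul_one] at hf
        omega
    exact ⟨by omega, by omega⟩
  -- now q ≥ 2
  have hq2 : 2 ≤ q := by omega
  -- neighbours have strictly smaller second coordinate
  have hslt : ∀ r₀ s₀ : ℤ, ¬ (2 ∣ r₀ ∧ 2 ∣ s₀) →
      (p * s₀ - r₀ * q = 2 ∨ p * s₀ - r₀ * q = -2) →
      (s₀ < q ∨ (s₀ = q ∧ r₀ < p)) → s₀ < q := by
    intro r₀ s₀ h2 he₀ hlt₀
    rcases hlt₀ with h | ⟨hsq, _⟩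
    · exact h
    exfalso
    rw [hsq] at he₀
    have hdvd : q ∣ 2 := by
      rcases he₀ with h | h
      · exact ⟨p - r₀, by linarith⟩
      · exact ⟨-(p - r₀), by linarith⟩
    have hqle : q ≤ 2 := Int.le_of_dvd (by norm_num) hdvd
    have hq : q = 2 := by omega
    rw [hq] at he₀
    -- p and r₀ are both odd, but p - r₀ = ±1
    have hp : ¬ (2 : ℤ) ∣ p := fun h => hv2 ⟨h, by omega⟩
    have hr : ¬ (2 : ℤ) ∣ r₀ := fun h => h2 ⟨h, by omega⟩
    omega
  have hs : s < q := hslt r s hu2 he hult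
  have hs' : s' < q := hslt r' s' hw2 hf hwlt
  -- sign analysis
  have same_sign : p * s - r * q = p * s' - r' * q → r = r' ∧ s = s' := by
    intro hsame
    have hdvd : q ∣ p * (s - s') := ⟨r - r', by linarith⟩
    have hdvd2 : q ∣ (s - s') := (hvc.symm).dvd_of_dvd_mul_left hdvd
    have hss : s = s' := by
      by_contra hne
      have h0 : s - s' ≠ 0 := by omega
      have := Int.le_of_dvd (abs_pos.mpr h0) ((dvd_abs q (s - s')).mpr hdvd2)
      rcases abs_cases (s - s') with ⟨h1, _⟩ | ⟨h1, _⟩ <;> omega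
    refine ⟨?_, hss⟩
    rw [hss] at hsame
    have : (r - r') * q = 0 := by linarith
    rcases mul_eq_zero.mp this with h | h <;> omega
  have hpar_u := par_edge hv2 hu2 he
  have hpar_w := par_edge hv2 hw2 hf
  have mixed : p * s - r * q + (p * s' - r' * q) = 0 → r = r' ∧ s = s' := by
    intro hzero
    have hsum : p * (s + s') = (r + r') * q := by ring_nf; linarith
    have hdvd : q ∣ (s + s') := (hvc.symm).dvd_of_dvd_mul_left ⟨r + r', by linarith⟩
    have hcase : s + s' = 0 ∨ s + s' = q := by
      obtain ⟨k, hk⟩ := hdvd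
      by_cases h0 : s + s' = 0
      · exact Or.inl h0
      have hpos : 0 < s + s' := by omega
      have hk0 : 0 < k := by
        by_contra hk0
        push_neg at hk0
        have : q * k ≤ q * 0 := mul_le_mul_of_nonneg_left hk0 (by omega)
        simp at this
        omega
      have hk2 : k < 2 := by
        by_contra hk2
        push_neg at hk2
        have : q * 2 ≤ q * k := mul_le_mul_of_nonneg_left hk2 (by omega)
        omega
      have : k = 1 := by omega
      rw [this, mul_one] at hk
      exact Or.inr hk
    rcases hcase with hcase | hcase
    · -- s = s' = 0, both are the vertex (1,0)
      have hr : r = 1 := by rcases hun with h3 | ⟨h3, h4⟩ <;> omega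
      have hr' : r' = 1 := by rcases hwn with h3 | ⟨h3, h4⟩ <;> omega
      exact ⟨by omega, by omega⟩
    · -- s + s' = q : parity contradiction
      exfalso
      have hp_eq : p = r + r' := by
        have h1 : p * q = (r + r') * q := by rw [hcase] at hsum; exact hsum
        have := mul_right_cancel₀ (b := q) (by omega) h1
        omega
      by_cases h2q : (2 : ℤ) ∣ q
      · -- q even: p odd, s, s' even, r, r' odd, p = r + r' even
        have hsp : (2 : ℤ) ∣ s := hpar_u.1 h2q
        have hsp' : (2 : ℤ) ∣ s' := hpar_w.1 h2q
        have hp : ¬ (2 : ℤ) ∣ p := fun h => hv2 ⟨h, h2q⟩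
        have hrr : ¬ (2 : ℤ) ∣ r := fun h => hu2 ⟨h, hsp⟩
        have hrr' : ¬ (2 : ℤ) ∣ r' := fun h => hw2 ⟨h, hsp'⟩
        omega
      · -- q odd: s, s' odd, but s + s' = q
        have hsp : ¬ (2 : ℤ) ∣ s := hpar_u.2 h2q
        have hsp' : ¬ (2 : ℤ) ∣ s' := hpar_w.2 h2q
        omega
  rcases he with he | he <;> rcases hf with hf | hf
  · exact same_sign (by omega)
  · exact mixed (by omega)
  · exact mixed (by omega)
  · exact same_sign (by omega)

private lemma key_inj {u v : NPP} (h : toLex (u.1.2, u.1.1) = toLex (v.1.2, v.1.1)) :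
    u = v := by
  have h' : (u.1.2, u.1.1) = (v.1.2, v.1.1) := toLex.injective h
  apply Subtype.ext
  have h1 := congrArg Prod.fst h'
  have h2 := congrArg Prod.snd h'
  simp only at h1 h2
  exact Prod.ext h2 h1

private lemma mem_edges_first {V : Type*} {G : SimpleGraph V} {a b : V} (P : G.Walk a b)
    (h : ¬ P.Nil) : s(a, P.getVert 1) ∈ P.edges := by
  cases P with
  | nil => simp at h
  | cons hadj q => simp [SimpleGraph.Walk.edges_cons]

/-- The graph `W̄` contains no cycle, i.e. it is a forest. -/
theorem Wbar_isAcyclic : Wbar.IsAcyclic := by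
  classical
  intro a c hc
  set key : NPP → ℤ ×ₗ ℤ := fun z => toLex (z.1.2, z.1.1) with hkey
  have hsne : c.support.toFinset.Nonempty := ⟨a, by simp⟩
  obtain ⟨x, hxmem, hxmax⟩ := Finset.exists_max_image c.support.toFinset key hsne
  rw [List.mem_toFinset] at hxmem
  have hmax : ∀ y ∈ c.support, key y ≤ key x := by
    intro y hy
    exact hxmax y (List.mem_toFinset.mpr hy)
  have hsub : ∀ y ∈ (c.rotate x hxmem).support.tail, y ∈ c.support := by
    intro y hy
    have := (SimpleGraph.Walk.support_rotate c x hxmem).mem_iff.mp hy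
    exact List.mem_of_mem_tail this
  have hc' := hc.rotate hxmem
  have hlen := hc'.three_le_length
  revert hc' hlen hsub
  generalize (c.rotate x hxmem) = c'
  intro hsub hc' hlen
  cases c' with
  | nil => simp at hlen
  | cons hadj p =>
    rename_i u
    rw [SimpleGraph.Walk.cons_isCycle_iff] at hc'
    obtain ⟨hp, hedge⟩ := hc'
    simp only [SimpleGraph.Walk.length_cons] at hlen
    have hplen : 0 < p.reverse.length := by
      rw [SimpleGraph.Walk.length_reverse]; omega
    have hpnn : ¬ p.reverse.Nil := by
      rw [SimpleGraph.Walk.not_nil_iff_lt_length]; exact hplen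
    set w := p.reverse.getVert 1 with hwdef
    have hxw : Wbar.Adj x w := p.reverse.adj_snd hpnn
    have hwedge : s(x, w) ∈ p.edges := by
      have := mem_edges_first p.reverse hpnn
      rw [SimpleGraph.Walk.edges_reverse, List.mem_reverse] at this
      exact this
    have hne : u ≠ w := by
      intro h
      rw [← h] at hwedge
      exact hedge hwedge
    have huI : u ∈ c.support := by
      apply hsub
      simp [SimpleGraph.Walk.support_cons]
    have hwI : w ∈ c.support := by
      apply hsub
      simp only [SimpleGraph.Walk.support_cons, List.tail_cons]
      have : w ∈ p.reverse.support := by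
        rw [SimpleGraph.Walk.mem_support_iff_exists_getVert]
        exact ⟨1, rfl, by omega⟩
      rw [SimpleGraph.Walk.support_reverse, List.mem_reverse] at this
      exact this
    have hult : key u < key x := by
      apply lt_of_le_of_ne (hmax u huI)
      intro h
      exact hadj.ne' (key_inj h)
    have hwlt : key w < key x := by
      apply lt_of_le_of_ne (hmax w hwI)
      intro h
      exact hxw.ne' (key_inj h)
    exact hne (unique_lower x u w hadj hxw hult hwlt)
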